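/- arXiv:2401.15694 — 2 statements merged into one kernel-verified Lean document; each statement's English description precedes it below -/
import Mathlib

section
/- Change of measure for constrained objectives: if for every state x the integrated likelihood q(x) under prior Π being zero implies the integrated likelihood q_c(x) under prior Π_c is also zero, then for any Markov policy π and any reward function r_c on state-action pairs, the expected total reward under the Π_c-predictive law equals the expected total reward under the Π-predictive law of the reweighted reward r̃_c(x, δ) = r_c(x, δ) · q_c(x)/q(x) (set to 0 when q(x) = 0). -/
open Finset
open scoped Classical

/-- change of measure for constrained objectives.  If `q x = 0` implies
`q_c x = 0` (absolute continuity of integrated likelihoods), then for a Markov policy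
`pol` the expected total reward under the `Π_c`-predictive law
(`P_c^π(X_t = x) = g_t^π(x) q_c(x)`) of the reward `r_c` equals the expected total reward
under the `Π`-predictive law (`P^π(X_t = x) = g_t^π(x) q(x)`) of the reweighted reward
`r̃_c(x, δ) = r_c(x, δ) · q_c(x)/q(x)` (set to `0` when `q x = 0`). -/
theorem change_of_measure_constrained_reward {X : Type*} [Fintype X] (n : ℕ)
    (g : ℕ → X → ℝ) (q qc : X → ℝ)
    (habs : ∀ x, q x = 0 → qc x = 0)
    (rc : X → ℝ → ℝ) (pol : X → ℝ) :
    ∑ t ∈ Finset.range (n + 1), ∑ x, (g t x * qc x) * rc x (pol x) =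
      ∑ t ∈ Finset.range (n + 1), ∑ x, (g t x * q x) *
        (if q x = 0 then 0 else rc x (pol x) * (qc x / q x)) := by
  refine Finset.sum_congr rfl fun t _ => Finset.sum_congr rfl fun x _ => ?_
  by_cases h : q x = 0
  · simp [h, habs x h]
  · field_simp [h]
    rw [if_neg h]
    field_simp
end

section
/- Mixture-prior representation of the robustness Lagrangian: for λ ≥ 0, the Lagrangian E^π_Π[Σ_t r(X_t, δ_t)] + λ·E^π_{LI}[Σ_t r_{LI}(X_t, δ_t)] arising in the prior-robust CMDP can be written as (1+λ) times an expected total reward under the predictive law of the mixture prior Π_mix = (1/(1+λ))Π + (λ/(1+λ))Π_LI with a state-dependent reweighted reward; specifically, for any state-reward functions whose expectations factor through predictive probabilities P_μ^π(X_t = x) = g_t^π(x) q_μ(x), one has E_Π^π[Σ_t r(X_t, δ_t)] + λ E_{LI}^π[Σ_t r_{LI}(X_t, δ_t)] = Σ_t Σ_x g_t^π(x)·[q_Π(x) r(x, π(x)) + λ q_{LI}(x) r_{LI}(x, π(x))], which is the expected total reward under Π_mix of the reward r_mix(x, δ) = (q_Π(x) r(x,δ) + λ q_{LI}(x) r_{LI}(x,δ))/q_mix(x)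 scaled by (1+λ), where q_mix = (q_Π + λ q_{LI})/(1+λ), provided q_mix(x) > 0 whenever the numerator is nonzero. -/
open Finset

/-- mixture-prior representation of the robustness Lagrangian.  With
predictive laws `P_μ^π(X_t = x) = g_t^π(x) q_μ(x)` and the integrated likelihood affine
in the prior, so that the mixture prior `Π_mix = (1/(1+λ))Π + (λ/(1+λ))Π_LI` has
`q_mix = (q_Π + λ q_LI)/(1+λ)`, the Lagrangian
`E_Π^π[Σ_t r(X_t, δ_t)] + λ·E_LI^π[Σ_t r_LI(X_t, δ_t)]` equals
`Σ_t Σ_x g_t^π(x)·[q_Π(x) r(x, π(x)) + λ q_LI(x) r_LI(x, π(x))]`, which is the expected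
total reward under the `Π_mix`-predictive law of the reweighted reward
`r_mix(x, δ) = (q_Π(x) r(x,δ) + λ q_LI(x) r_LI(x,δ))/q_mix(x)`, provided
`q_mix(x) > 0` whenever the numerator is nonzero. -/
theorem mixture_prior_lagrangian {X : Type*} [Fintype X] (n : ℕ)
    (g : ℕ → X → ℝ) (qP qLI : X → ℝ)
    (r rLI : X → ℝ → ℝ) (pol : X → ℝ) (lam : ℝ) (hlam : 0 ≤ lam)
    (qmix : X → ℝ) (hqmix : ∀ x, qmix x = (qP x + lam * qLI x) / (1 + lam))
    (rmix : X → ℝ → ℝ)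
    (hrmix : ∀ x δ, rmix x δ = (qP x * r x δ + lam * qLI x * rLI x δ) / qmix x)
    (hpos : ∀ x, qP x * r x (pol x) + lam * qLI x * rLI x (pol x) ≠ 0 → 0 < qmix x) :
    ((∑ t ∈ Finset.range (n + 1), ∑ x, (g t x * qP x) * r x (pol x))
        + lam * ∑ t ∈ Finset.range (n + 1), ∑ x, (g t x * qLI x) * rLI x (pol x)
      = ∑ t ∈ Finset.range (n + 1), ∑ x,
          g t x * (qP x * r x (pol x) + lam * qLI x * rLI x (pol x))) ∧
    ((∑ t ∈ Finset.range (n + 1), ∑ x, (g t x * qP x) * r x (pol x))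
        + lam * ∑ t ∈ Finset.range (n + 1), ∑ x, (g t x * qLI x) * rLI x (pol x)
      = ∑ t ∈ Finset.range (n + 1), ∑ x, (g t x * qmix x) * rmix x (pol x)) := by
  have h1 : (∑ t ∈ Finset.range (n + 1), ∑ x, (g t x * qP x) * r x (pol x))
        + lam * ∑ t ∈ Finset.range (n + 1), ∑ x, (g t x * qLI x) * rLI x (pol x)
      = ∑ t ∈ Finset.range (n + 1), ∑ x,
          g t x * (qP x * r x (pol x) + lam * qLI x * rLI x (pol x)) := by
    rw [Finset.mul_sum, ← Finset.sum_add_distrib]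
    refine Finset.sum_congr rfl fun t _ => ?_
    rw [Finset.mul_sum, ← Finset.sum_add_distrib]
    refine Finset.sum_congr rfl fun x _ => ?_
    ring
  refine ⟨h1, h1.trans (Finset.sum_congr rfl fun t _ => Finset.sum_congr rfl fun x _ => ?_)⟩
  rw [hrmix]
  by_cases h : qP x * r x (pol x) + lam * qLI x * rLI x (pol x) = 0
  · rw [h]; simp
  · have := hpos x h
    field_simp
end
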